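/- If N ⊆ ℤ² is convex in the sense that N = conv(N) ∩ ℤ², then for every p ∈ ℕ, N^p is also convex in this sense: N^p = conv(N^p) ∩ ℤ². -/

import Mathlib

open Pointwise

/-- `mpow N k` is the `k`-fold Minkowski sum of `N` with itself (`mpow N 0 = {0}`). -/
def mpow (N : Set (ℤ × ℤ)) : ℕ → Set (ℤ × ℤ)
  | 0 => {0}
  | k + 1 => N + mpow N k

/-- The canonical embedding of `ℤ²` into `ℝ²`. -/
def emb (v : ℤ × ℤ) : ℝ × ℝ := ((v.1 : ℝ), (v.2 : ℝ))

/-- `M ⊆ ℤ²` is lattice-convex if `M = conv(M) ∩ ℤ²`. -/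
def LatticeConvex (M : Set (ℤ × ℤ)) : Prop :=
  ∀ z : ℤ × ℤ, z ∈ M ↔ emb z ∈ convexHull ℝ (emb '' M)

/-! Auxiliary definitions -/

/-- barycentric membership in `p`-dilate of triangle `a b c`. -/
def InD (p : ℝ) (a b c x : ℝ × ℝ) : Prop :=
  ∃ α β γ : ℝ, 0 ≤ α ∧ 0 ≤ β ∧ 0 ≤ γ ∧ α + β + γ = p ∧
    x.1 = α * a.1 + β * b.1 + γ * c.1 ∧ x.2 = α * a.2 + β * b.2 + γ * c.2

def detZ (a b c : ℤ × ℤ) : ℤ :=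
  (b.1 - a.1) * (c.2 - a.2) - (b.2 - a.2) * (c.1 - a.1)

lemma emb_add (a b : ℤ × ℤ) : emb (a + b) = emb a + emb b := by
  simp [emb, Prod.ext_iff]

lemma emb_sub (a b : ℤ × ℤ) : emb (a - b) = emb a - emb b := by
  simp [emb, Prod.ext_iff]

lemma emb_inj : Function.Injective emb := by
  intro a b h
  simp only [emb, Prod.ext_iff] at h
  exact Prod.ext (by exact_mod_cast h.1) (by exact_mod_cast h.2)

lemma mem_hull3_iff {a b c x : ℝ × ℝ} :
    x ∈ convexHull ℝ ({a, b, c} : Set (ℝ × ℝ)) ↔ InD 1 a b c x := by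
  have hrw : convexHull ℝ ({a, b, c} : Set (ℝ × ℝ)) = convexJoin ℝ {a} (segment ℝ b c) := by
    rw [convexHull_insert ⟨b, by simp⟩, convexHull_pair]
  rw [hrw]
  constructor
  · intro hx
    rw [mem_convexJoin] at hx
    obtain ⟨a', ha', y, hy, hx⟩ := hx
    rw [Set.mem_singleton_iff] at ha'
    subst ha'
    obtain ⟨u, v, hu, hv, huv, hy⟩ := hy
    obtain ⟨s, t, hs, ht, hst, hx⟩ := hx
    refine ⟨s, t * u, t * v, hs, by positivity, by positivity, by nlinarith, ?_, ?_⟩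
    · have := congrArg Prod.fst hx
      have h2 := congrArg Prod.fst hy
      simp [Prod.ext_iff] at this h2 ⊢
      rw [← this, ← h2]; ring
    · have := congrArg Prod.snd hx
      have h2 := congrArg Prod.snd hy
      simp [Prod.ext_iff] at this h2 ⊢
      rw [← this, ← h2]; ring
  · rintro ⟨α, β, γ, hα, hβ, hγ, hs, h1, h2⟩
    rw [mem_convexJoin]
    by_cases hbc : β + γ = 0
    · have hβ0 : β = 0 := by linarith
      have hγ0 : γ = 0 := by linarith
      have hα1 : α = 1 := by linarith
      refine ⟨a, rfl, b, left_mem_segment ℝ b c, 1, 0, by norm_num, by norm_num, by norm_num, ?_⟩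
      apply Prod.ext <;> simp [h1, h2, hα1, hβ0, hγ0]
    · have hbc' : 0 < β + γ := lt_of_le_of_ne (by linarith) (Ne.symm hbc)
      refine ⟨a, rfl, (β / (β + γ)) • b + (γ / (β + γ)) • c,
        ⟨β / (β + γ), γ / (β + γ), by positivity, by positivity, by field_simp, rfl⟩,
        α, β + γ, hα, le_of_lt hbc', by linarith, ?_⟩
      apply Prod.ext <;> simp [h1, h2] <;> field_simp <;> ring

lemma InD_subst {p : ℝ} {a b c u v w x : ℝ × ℝ} (h : InD p a b c x)
    (ha : InD 1 u v w a) (hb : InD 1 u v w b) (hc : InD 1 u v w c) :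
    InD p u v w x := by
  obtain ⟨α, β, γ, hα, hβ, hγ, hs, h1, h2⟩ := h
  obtain ⟨a1, a2, a3, ha1, ha2, ha3, has, hae1, hae2⟩ := ha
  obtain ⟨b1, b2, b3, hb1, hb2, hb3, hbs, hbe1, hbe2⟩ := hb
  obtain ⟨c1, c2, c3, hc1, hc2, hc3, hcs, hce1, hce2⟩ := hc
  refine ⟨α * a1 + β * b1 + γ * c1, α * a2 + β * b2 + γ * c2, α * a3 + β * b3 + γ * c3,
    by positivity, by positivity, by positivity, by nlinarith, by rw [h1, hae1, hbe1, hce1]; ring,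
    by rw [h2, hae2, hbe2, hce2]; ring⟩

lemma InD_vertex0 (a b c : ℝ × ℝ) : InD 1 a b c a :=
  ⟨1, 0, 0, by norm_num, by norm_num, by norm_num, by ring, by ring, by ring⟩
lemma InD_vertex1 (a b c : ℝ × ℝ) : InD 1 a b c b :=
  ⟨0, 1, 0, by norm_num, by norm_num, by norm_num, by ring, by ring, by ring⟩
lemma InD_vertex2 (a b c : ℝ × ℝ) : InD 1 a b c c :=
  ⟨0, 0, 1, by norm_num, by norm_num, by norm_num, by ring, by ring, by ring⟩

/-- segment decomposition lemma -/
lemma seg_main : ∀ (p : ℕ) (a b z : ℤ × ℤ) (α β : ℝ), 0 ≤ α → 0 ≤ β → α + β = p →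
    emb z = α • emb a + β • emb b →
    ∃ l : List (ℤ × ℤ), l.length = p ∧ (∀ w ∈ l, InD 1 (emb a) (emb b) (emb b) (emb w)) ∧
      l.sum = z := by
  intro p
  induction p with
  | zero =>
    intro a b z α β hα hβ hs hz
    have hα0 : α = 0 := by push_cast at hs; linarith
    have hβ0 : β = 0 := by push_cast at hs; linarith
    have : emb z = emb 0 := by
      rw [hz]; subst hα0; subst hβ0; simp [emb]; rfl
    exact ⟨[], rfl, by simp, by simpa using (emb_inj this).symm⟩
  | succ q ih =>
    intro a b z α β hα hβ hs hz
    by_cases h1 : 1 ≤ α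
    · obtain ⟨l, hlen, hmem, hsum⟩ := ih a b (z - a) (α - 1) β (by linarith) hβ
        (by push_cast at hs ⊢; linarith)
        (by rw [emb_sub, hz]; apply Prod.ext <;> simp [smul_eq_mul] <;> ring)
      refine ⟨a :: l, by simp [hlen], ?_, by simp [hsum]⟩
      intro w hw
      rcases List.mem_cons.mp hw with h | h
      · subst h; exact InD_vertex0 _ _ _
      · exact hmem w h
    · by_cases h2 : 1 ≤ β
      · obtain ⟨l, hlen, hmem, hsum⟩ := ih a b (z - b) α (β - 1) hα (by linarith)
          (by push_cast at hs ⊢; linarith)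
          (by rw [emb_sub, hz]; apply Prod.ext <;> simp [smul_eq_mul] <;> ring)
        refine ⟨b :: l, by simp [hlen], ?_, by simp [hsum]⟩
        intro w hw
        rcases List.mem_cons.mp hw with h | h
        · subst h; exact InD_vertex1 _ _ _
        · exact hmem w h
      · push_neg at h1 h2
        have hq : q = 0 := by
          by_contra hq
          have : (1:ℝ) ≤ q := by exact_mod_cast Nat.one_le_iff_ne_zero.mpr hq
          push_cast at hs; linarith
        subst hq
        refine ⟨[z], rfl, ?_, by simp⟩
        intro w hw
        rcases List.mem_singleton.mp hw with rfl
        refine ⟨α, β, 0, hα, hβ, le_refl _, by push_cast at hs; linarith, ?_, ?_⟩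
        · have := congrArg Prod.fst hz; simp [smul_eq_mul] at this; rw [this]; ring
        · have := congrArg Prod.snd hz; simp [smul_eq_mul] at this; rw [this]; ring

/-- collinearity split -/
lemma collinear_split (a b c : ℝ × ℝ)
    (h : (b.1 - a.1) * (c.2 - a.2) - (b.2 - a.2) * (c.1 - a.1) = 0) :
    (∃ t : ℝ, 0 ≤ t ∧ t ≤ 1 ∧ c = (1 - t) • a + t • b) ∨
    (∃ t : ℝ, 0 ≤ t ∧ t ≤ 1 ∧ b = (1 - t) • a + t • c) ∨
    (∃ t : ℝ, 0 ≤ t ∧ t ≤ 1 ∧ a = (1 - t) • b + t • c) := by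
  by_cases hba : b = a
  · exact Or.inr (Or.inl ⟨0, le_refl _, by norm_num, by subst hba; apply Prod.ext <;> simp⟩)
  · have hu : b.1 - a.1 ≠ 0 ∨ b.2 - a.2 ≠ 0 := by
      by_contra hc
      push_neg at hc
      exact hba (Prod.ext (by linarith [hc.1]) (by linarith [hc.2]))
    -- c - a = k • (b - a)
    obtain ⟨k, hk1, hk2⟩ : ∃ k : ℝ, c.1 - a.1 = k * (b.1 - a.1) ∧ c.2 - a.2 = k * (b.2 - a.2) := by
      rcases hu with h | h
      · exact ⟨(c.1 - a.1) / (b.1 - a.1), by field_simp, by field_simp; nlinarith⟩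
      · exact ⟨(c.2 - a.2) / (b.2 - a.2), by field_simp; nlinarith, by field_simp⟩
    rcases le_or_gt 0 k with hk0 | hk0
    · rcases le_or_gt k 1 with hk3 | hk3
      · exact Or.inl ⟨k, hk0, hk3, by apply Prod.ext <;> simp [smul_eq_mul] <;> nlinarith⟩
      · refine Or.inr (Or.inl ⟨1 / k, by positivity, by rw [div_le_one (by linarith)]; linarith, ?_⟩)
        have hkne : k ≠ 0 := by linarith
        apply Prod.ext <;> simp [smul_eq_mul] <;> field_simp <;> nlinarith
    · have h1k : (0:ℝ) < 1 - k := by linarith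
      refine Or.inr (Or.inr ⟨1 / (1 - k), by positivity, ?_, ?_⟩)
      · rw [div_le_one (by linarith)]; linarith
      · have hkne : (1:ℝ) - k ≠ 0 := by linarith
        apply Prod.ext <;> simp [smul_eq_mul] <;> field_simp <;> nlinarith

lemma detZ_swap01 (a b c : ℤ × ℤ) : detZ b a c = - detZ a b c := by
  simp only [detZ]; ring

lemma detZ_swap12 (a b c : ℤ × ℤ) : detZ a c b = - detZ a b c := by
  simp only [detZ]; ring

lemma InD_perm01 {p : ℝ} {a b c x : ℝ × ℝ} (h : InD p a b c x) : InD p b a c x := by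
  obtain ⟨α, β, γ, h1, h2, h3, h4, h5, h6⟩ := h
  exact ⟨β, α, γ, h2, h1, h3, by linarith, by rw [h5]; ring, by rw [h6]; ring⟩

lemma InD_perm12 {p : ℝ} {a b c x : ℝ × ℝ} (h : InD p a b c x) : InD p a c b x := by
  obtain ⟨α, β, γ, h1, h2, h3, h4, h5, h6⟩ := h
  exact ⟨α, γ, β, h1, h3, h2, by linarith, by rw [h5]; ring, by rw [h6]; ring⟩


lemma detZ_cast (a b c : ℤ × ℤ) :
    (detZ a b c : ℝ) = ((emb b).1 - (emb a).1) * ((emb c).2 - (emb a).2) -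
      ((emb b).2 - (emb a).2) * ((emb c).1 - (emb a).1) := by
  simp only [detZ, emb]; push_cast; ring

lemma detZ_cycle (a b c : ℤ × ℤ) : detZ c a b = detZ a b c := by
  simp only [detZ]; ring

lemma tri2_core (n : ℕ)
    (IH : ∀ m, m < n → ∀ v0 v1 v2 z : ℤ × ℤ, (detZ v0 v1 v2).natAbs = m →
      InD 2 (emb v0) (emb v1) (emb v2) (emb z) →
      ∃ x y : ℤ × ℤ, InD 1 (emb v0) (emb v1) (emb v2) (emb x) ∧
        InD 1 (emb v0) (emb v1) (emb v2) (emb y) ∧ x + y = z)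
    (v0 v1 v2 z : ℤ × ℤ) (hn : (detZ v0 v1 v2).natAbs = n) (hd0 : detZ v0 v1 v2 ≠ 0)
    (α0 α1 α2 : ℝ) (h00 : 0 < α0) (h01 : α0 < 1) (h10 : 0 ≤ α1) (h11 : α1 < 1)
    (h20 : 0 ≤ α2) (h21 : α2 < 1) (hs : α0 + α1 + α2 = 2)
    (he1 : (emb z).1 = α0 * (emb v0).1 + α1 * (emb v1).1 + α2 * (emb v2).1)
    (he2 : (emb z).2 = α0 * (emb v0).2 + α1 * (emb v1).2 + α2 * (emb v2).2)
    (hmin1 : α0 * (1 - α1) ≤ α1 * (1 - α0)) (hmin2 : α0 * (1 - α2) ≤ α2 * (1 - α0)) :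
    ∃ x y : ℤ × ℤ, InD 1 (emb v0) (emb v1) (emb v2) (emb x) ∧
      InD 1 (emb v0) (emb v1) (emb v2) (emb y) ∧ x + y = z := by
  have hg0 : (0:ℝ) < 1 - α0 := by linarith
  set z' : ℤ × ℤ := v0 + v1 + v2 - z with hz'def
  have hz'1 : (emb z').1 = (1-α0) * (emb v0).1 + (1-α1) * (emb v1).1 + (1-α2) * (emb v2).1 := by
    have h : (emb z').1 = (emb v0).1 + (emb v1).1 + (emb v2).1 - (emb z).1 := by
      simp only [emb, hz'def, Prod.fst_add, Prod.fst_sub]; push_cast; ring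
    rw [h, he1]; ring
  have hz'2 : (emb z').2 = (1-α0) * (emb v0).2 + (1-α1) * (emb v1).2 + (1-α2) * (emb v2).2 := by
    have h : (emb z').2 = (emb v0).2 + (emb v1).2 + (emb v2).2 - (emb z).2 := by
      simp only [emb, hz'def, Prod.snd_add, Prod.snd_sub]; push_cast; ring
    rw [h, he2]; ring
  set t : ℝ := α0 / (1 - α0) with htdef
  have ht0 : 0 ≤ t := by positivity
  have htb1 : t * (1 - α1) ≤ α1 := by
    rw [htdef, div_mul_eq_mul_div, div_le_iff₀ hg0]; nlinarith
  have htb2 : t * (1 - α2) ≤ α2 := by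
    rw [htdef, div_mul_eq_mul_div, div_le_iff₀ hg0]; nlinarith
  have htg : t * (1 - α0) = α0 := div_mul_cancel₀ α0 (ne_of_gt hg0)
  have hInD2 : InD 2 (emb z') (emb v1) (emb v2) (emb z) := by
    refine ⟨t, α1 - t * (1 - α1), α2 - t * (1 - α2), ht0, by linarith, by linarith,
      by nlinarith, ?_, ?_⟩
    · rw [hz'1, he1]; linear_combination (-(emb v0).1) * htg
    · rw [hz'2, he2]; linear_combination (-(emb v0).2) * htg
  have hDcast : ((detZ z' v1 v2 : ℤ) : ℝ) = (1 - α0) * ((detZ v0 v1 v2 : ℤ) : ℝ) := by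
    rw [detZ_cast, detZ_cast, hz'1, hz'2,
      show α2 = 2 - α0 - α1 from by linarith]
    ring
  have hmlt : (detZ z' v1 v2).natAbs < n := by
    have habs : |((detZ z' v1 v2 : ℤ) : ℝ)| < |((detZ v0 v1 v2 : ℤ) : ℝ)| := by
      rw [hDcast, abs_mul, abs_of_pos hg0]
      have hD0 : 0 < |((detZ v0 v1 v2 : ℤ) : ℝ)| := by
        simp only [abs_pos, ne_eq, Int.cast_eq_zero]; exact hd0
      nlinarith
    have habsZ : |detZ z' v1 v2| < |detZ v0 v1 v2| := by exact_mod_cast habs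
    rw [Int.abs_eq_natAbs, Int.abs_eq_natAbs] at habsZ
    rw [← hn]
    exact_mod_cast habsZ
  obtain ⟨x, y, hx, hy, hxy⟩ := IH _ hmlt z' v1 v2 z rfl hInD2
  have hz'InD : InD 1 (emb v0) (emb v1) (emb v2) (emb z') :=
    ⟨1 - α0, 1 - α1, 1 - α2, by linarith, by linarith, by linarith, by linarith, hz'1, hz'2⟩
  exact ⟨x, y, InD_subst hx hz'InD (InD_vertex1 _ _ _) (InD_vertex2 _ _ _),
    InD_subst hy hz'InD (InD_vertex1 _ _ _) (InD_vertex2 _ _ _), hxy⟩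

/-- the key 2-dilate decomposition for lattice triangles -/
lemma tri2 : ∀ (n : ℕ) (v0 v1 v2 z : ℤ × ℤ), (detZ v0 v1 v2).natAbs = n →
    InD 2 (emb v0) (emb v1) (emb v2) (emb z) →
    ∃ x y : ℤ × ℤ, InD 1 (emb v0) (emb v1) (emb v2) (emb x) ∧
      InD 1 (emb v0) (emb v1) (emb v2) (emb y) ∧ x + y = z := by
  intro n
  induction n using Nat.strong_induction_on with
  | _ n IH =>
  intro v0 v1 v2 z hn h
  obtain ⟨α0, α1, α2, h0, h1, h2, hs, he1, he2⟩ := h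
  -- subtract a vertex if some coefficient is ≥ 1
  by_cases hc0 : 1 ≤ α0
  · refine ⟨v0, z - v0, InD_vertex0 _ _ _, ⟨α0 - 1, α1, α2, by linarith, h1, h2, by linarith,
      ?_, ?_⟩, by abel⟩
    · rw [emb_sub]; simp only [Prod.fst_sub]; rw [he1]; ring
    · rw [emb_sub]; simp only [Prod.snd_sub]; rw [he2]; ring
  by_cases hc1 : 1 ≤ α1
  · refine ⟨v1, z - v1, InD_vertex1 _ _ _, ⟨α0, α1 - 1, α2, h0, by linarith, h2, by linarith,
      ?_, ?_⟩, by abel⟩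
    · rw [emb_sub]; simp only [Prod.fst_sub]; rw [he1]; ring
    · rw [emb_sub]; simp only [Prod.snd_sub]; rw [he2]; ring
  by_cases hc2 : 1 ≤ α2
  · refine ⟨v2, z - v2, InD_vertex2 _ _ _, ⟨α0, α1, α2 - 1, h0, h1, by linarith, by linarith,
      ?_, ?_⟩, by abel⟩
    · rw [emb_sub]; simp only [Prod.fst_sub]; rw [he1]; ring
    · rw [emb_sub]; simp only [Prod.snd_sub]; rw [he2]; ring
  push_neg at hc0 hc1 hc2
  have hp0 : 0 < α0 := by linarith
  have hp1 : 0 < α1 := by linarith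
  have hp2 : 0 < α2 := by linarith
  by_cases hdet : detZ v0 v1 v2 = 0
  · -- collinear case: reduce to a segment
    have hcol : ((emb v1).1 - (emb v0).1) * ((emb v2).2 - (emb v0).2) -
        ((emb v1).2 - (emb v0).2) * ((emb v2).1 - (emb v0).1) = 0 := by
      rw [← detZ_cast, hdet]; norm_num
    have htwo : ((2:ℕ):ℝ) = (2:ℝ) := by norm_num
    rcases collinear_split (emb v0) (emb v1) (emb v2) hcol with ⟨u, hu0, hu1, hu⟩ | ⟨u, hu0, hu1, hu⟩ | ⟨u, hu0, hu1, hu⟩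
    · -- emb v2 = (1-u) emb v0 + u emb v1
      have hf := congrArg Prod.fst hu
      have hg := congrArg Prod.snd hu
      simp only [Prod.fst_add, Prod.snd_add, Prod.smul_fst, Prod.smul_snd, smul_eq_mul] at hf hg
      obtain ⟨l, hlen, hmem, hsum⟩ := seg_main 2 v0 v1 z (α0 + α2 * (1 - u)) (α1 + α2 * u)
        (by nlinarith) (by nlinarith) (by rw [htwo]; linarith)
        (by apply Prod.ext <;> simp only [Prod.fst_add, Prod.snd_add, Prod.smul_fst,
              Prod.smul_snd, smul_eq_mul] <;> [rw [he1, hf]; rw [he2, hg]] <;> ring)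
      obtain ⟨x, y, rfl⟩ := List.length_eq_two.mp hlen
      refine ⟨x, y, InD_subst (hmem x (by simp)) (InD_vertex0 _ _ _) (InD_vertex1 _ _ _)
        (InD_vertex1 _ _ _), InD_subst (hmem y (by simp)) (InD_vertex0 _ _ _)
        (InD_vertex1 _ _ _) (InD_vertex1 _ _ _), by simpa using hsum⟩
    · -- emb v1 = (1-u) emb v0 + u emb v2
      have hf := congrArg Prod.fst hu
      have hg := congrArg Prod.snd hu
      simp only [Prod.fst_add, Prod.snd_add, Prod.smul_fst, Prod.smul_snd, smul_eq_mul] at hf hg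
      obtain ⟨l, hlen, hmem, hsum⟩ := seg_main 2 v0 v2 z (α0 + α1 * (1 - u)) (α2 + α1 * u)
        (by nlinarith) (by nlinarith) (by rw [htwo]; linarith)
        (by apply Prod.ext <;> simp only [Prod.fst_add, Prod.snd_add, Prod.smul_fst,
              Prod.smul_snd, smul_eq_mul] <;> [rw [he1, hf]; rw [he2, hg]] <;> ring)
      obtain ⟨x, y, rfl⟩ := List.length_eq_two.mp hlen
      refine ⟨x, y, InD_subst (hmem x (by simp)) (InD_vertex0 _ _ _) (InD_vertex2 _ _ _)
        (InD_vertex2 _ _ _), InD_subst (hmem y (by simp)) (InD_vertex0 _ _ _)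
        (InD_vertex2 _ _ _) (InD_vertex2 _ _ _), by simpa using hsum⟩
    · -- emb v0 = (1-u) emb v1 + u emb v2
      have hf := congrArg Prod.fst hu
      have hg := congrArg Prod.snd hu
      simp only [Prod.fst_add, Prod.snd_add, Prod.smul_fst, Prod.smul_snd, smul_eq_mul] at hf hg
      obtain ⟨l, hlen, hmem, hsum⟩ := seg_main 2 v1 v2 z (α1 + α0 * (1 - u)) (α2 + α0 * u)
        (by nlinarith) (by nlinarith) (by rw [htwo]; linarith)
        (by apply Prod.ext <;> simp only [Prod.fst_add, Prod.snd_add, Prod.smul_fst,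
              Prod.smul_snd, smul_eq_mul] <;> [rw [he1, hf]; rw [he2, hg]] <;> ring)
      obtain ⟨x, y, rfl⟩ := List.length_eq_two.mp hlen
      refine ⟨x, y, InD_subst (hmem x (by simp)) (InD_vertex1 _ _ _) (InD_vertex2 _ _ _)
        (InD_vertex2 _ _ _), InD_subst (hmem y (by simp)) (InD_vertex1 _ _ _)
        (InD_vertex2 _ _ _) (InD_vertex2 _ _ _), by simpa using hsum⟩
  · -- nondegenerate: pick the vertex with minimal ratio and recurse
    rcases le_total (α0 * (1 - α1)) (α1 * (1 - α0)) with h01 | h01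
    · rcases le_total (α0 * (1 - α2)) (α2 * (1 - α0)) with h02 | h02
      · exact tri2_core n IH v0 v1 v2 z hn hdet α0 α1 α2 hp0 hc0 (le_of_lt hp1) hc1
          (le_of_lt hp2) hc2 hs he1 he2 h01 h02
      · -- α2 is minimal
        have h21' : α2 * (1 - α1) ≤ α1 * (1 - α2) := by nlinarith
        obtain ⟨x, y, hx, hy, hxy⟩ := tri2_core n IH v2 v0 v1 z
          (by rw [detZ_cycle]; exact hn) (by rw [detZ_cycle]; exact hdet)
          α2 α0 α1 hp2 hc2 (le_of_lt hp0) hc0 (le_of_lt hp1) hc1 (by linarith)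
          (by rw [he1]; ring) (by rw [he2]; ring) h02 h21'
        exact ⟨x, y, InD_perm12 (InD_perm01 hx), InD_perm12 (InD_perm01 hy), hxy⟩
    · rcases le_total (α1 * (1 - α2)) (α2 * (1 - α1)) with h12 | h12
      · -- α1 is minimal
        obtain ⟨x, y, hx, hy, hxy⟩ := tri2_core n IH v1 v0 v2 z
          (by rw [detZ_swap01]; simpa using hn) (by rw [detZ_swap01]; simpa using hdet)
          α1 α0 α2 hp1 hc1 (le_of_lt hp0) hc0 (le_of_lt hp2) hc2 (by linarith)
          (by rw [he1]; ring) (by rw [he2]; ring) h01 h12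
        exact ⟨x, y, InD_perm01 hx, InD_perm01 hy, hxy⟩
      · -- α2 is minimal
        have h20' : α2 * (1 - α0) ≤ α0 * (1 - α2) := by nlinarith
        obtain ⟨x, y, hx, hy, hxy⟩ := tri2_core n IH v2 v0 v1 z
          (by rw [detZ_cycle]; exact hn) (by rw [detZ_cycle]; exact hdet)
          α2 α0 α1 hp2 hc2 (le_of_lt hp0) hc0 (le_of_lt hp1) hc1 (by linarith)
          (by rw [he1]; ring) (by rw [he2]; ring) h20' h12
        exact ⟨x, y, InD_perm12 (InD_perm01 hx), InD_perm12 (InD_perm01 hy), hxy⟩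

/-- main triangle decomposition -/
lemma tri_main : ∀ (p : ℕ) (v0 v1 v2 z : ℤ × ℤ), InD p (emb v0) (emb v1) (emb v2) (emb z) →
    ∃ l : List (ℤ × ℤ), l.length = p ∧
      (∀ w ∈ l, InD 1 (emb v0) (emb v1) (emb v2) (emb w)) ∧ l.sum = z := by
  intro p
  induction p with
  | zero =>
    intro v0 v1 v2 z h
    obtain ⟨α0, α1, α2, h0, h1, h2, hs, he1, he2⟩ := h
    push_cast at hs
    have hα0 : α0 = 0 := by linarith
    have hα1 : α1 = 0 := by linarith
    have hα2 : α2 = 0 := by linarith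
    have hz1 : ((z.1 : ℝ)) = 0 := by simpa [emb, hα0, hα1, hα2] using he1
    have hz2 : ((z.2 : ℝ)) = 0 := by simpa [emb, hα0, hα1, hα2] using he2
    refine ⟨[], rfl, by simp, ?_⟩
    simp only [List.sum_nil]
    exact (Prod.ext (by exact_mod_cast hz1) (by exact_mod_cast hz2)).symm
  | succ q ih =>
    intro v0 v1 v2 z h
    obtain ⟨α0, α1, α2, h0, h1, h2, hs, he1, he2⟩ := h
    by_cases hc0 : 1 ≤ α0
    · obtain ⟨l, hlen, hmem, hsum⟩ := ih v0 v1 v2 (z - v0)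
        ⟨α0 - 1, α1, α2, by linarith, h1, h2, by push_cast at hs ⊢; linarith,
          by rw [emb_sub]; simp only [Prod.fst_sub]; rw [he1]; ring,
          by rw [emb_sub]; simp only [Prod.snd_sub]; rw [he2]; ring⟩
      refine ⟨v0 :: l, by simp [hlen], ?_, by simp [hsum]⟩
      intro w hw
      rcases List.mem_cons.mp hw with rfl | hw'
      · exact InD_vertex0 _ _ _
      · exact hmem w hw'
    · by_cases hc1 : 1 ≤ α1
      · obtain ⟨l, hlen, hmem, hsum⟩ := ih v0 v1 v2 (z - v1)
          ⟨α0, α1 - 1, α2, h0, by linarith, h2, by push_cast at hs ⊢; linarith,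
            by rw [emb_sub]; simp only [Prod.fst_sub]; rw [he1]; ring,
            by rw [emb_sub]; simp only [Prod.snd_sub]; rw [he2]; ring⟩
        refine ⟨v1 :: l, by simp [hlen], ?_, by simp [hsum]⟩
        intro w hw
        rcases List.mem_cons.mp hw with rfl | hw'
        · exact InD_vertex1 _ _ _
        · exact hmem w hw'
      · by_cases hc2 : 1 ≤ α2
        · obtain ⟨l, hlen, hmem, hsum⟩ := ih v0 v1 v2 (z - v2)
            ⟨α0, α1, α2 - 1, h0, h1, by linarith, by push_cast at hs ⊢; linarith,
              by rw [emb_sub]; simp only [Prod.fst_sub]; rw [he1]; ring,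
              by rw [emb_sub]; simp only [Prod.snd_sub]; rw [he2]; ring⟩
          refine ⟨v2 :: l, by simp [hlen], ?_, by simp [hsum]⟩
          intro w hw
          rcases List.mem_cons.mp hw with rfl | hw'
          · exact InD_vertex2 _ _ _
          · exact hmem w hw'
        · push_neg at hc0 hc1 hc2
          have hq2 : q ≤ 1 := by
            by_contra hq
            push_neg at hq
            have : (2:ℝ) ≤ q := by exact_mod_cast hq
            push_cast at hs; linarith
          interval_cases q
          · -- p = 1
            exact ⟨[z], rfl, by
              intro w hw
              rcases List.mem_singleton.mp hw with rfl
              exact ⟨α0, α1, α2, h0, h1, h2, by push_cast at hs; linarith, he1, he2⟩,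
              by simp⟩
          · -- p = 2
            obtain ⟨x, y, hx, hy, hxy⟩ := tri2 (detZ v0 v1 v2).natAbs v0 v1 v2 z rfl
              ⟨α0, α1, α2, h0, h1, h2, by push_cast at hs; linarith, he1, he2⟩
            refine ⟨[x, y], rfl, ?_, by simpa using hxy⟩
            intro w hw
            rcases List.mem_cons.mp hw with rfl | hw'
            · exact hx
            · rcases List.mem_singleton.mp hw' with rfl
              exact hy

lemma sum_mem_mpow (N : Set (ℤ × ℤ)) : ∀ (p : ℕ) (l : List (ℤ × ℤ)), l.length = p →
    (∀ w ∈ l, w ∈ N) → l.sum ∈ mpow N p := by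
  intro p
  induction p with
  | zero => intro l hl _; rw [List.length_eq_zero_iff] at hl; subst hl; simp [mpow]
  | succ q ih =>
    intro l hl hm
    match l with
    | w :: l' =>
      simp only [List.length_cons, Nat.add_right_cancel_iff] at hl
      have h1 : w ∈ N := hm w List.mem_cons_self
      have h2 : l'.sum ∈ mpow N q := ih l' hl (fun u hu => hm u (List.mem_cons_of_mem _ hu))
      simpa [mpow] using Set.add_mem_add h1 h2

lemma caratheodory_three {A : Set (ℝ × ℝ)} {x : ℝ × ℝ} (hx : x ∈ convexHull ℝ A) :
    ∃ a b c, a ∈ A ∧ b ∈ A ∧ c ∈ A ∧ x ∈ convexHull ℝ ({a, b, c} : Set (ℝ × ℝ)) := by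
  rw [convexHull_eq_union] at hx
  simp only [Set.mem_iUnion] at hx
  obtain ⟨t, hts, hai, hxt⟩ := hx
  have hcard : t.card ≤ 3 := by
    have h1 := hai.card_le_finrank_succ
    have h2 : Module.finrank ℝ (vectorSpan ℝ (Set.range ((↑) : t → ℝ × ℝ))) ≤ 2 := by
      have h3 := Submodule.finrank_le (vectorSpan ℝ (Set.range ((↑) : t → ℝ × ℝ)))
      have h4 : Module.finrank ℝ (ℝ × ℝ) = 2 := by
        rw [Module.finrank_prod, Module.finrank_self]
      omega
    have h5 : Fintype.card ↑t = t.card := Fintype.card_coe t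
    omega
  have hcases : t.card = 0 ∨ t.card = 1 ∨ t.card = 2 ∨ t.card = 3 := by omega
  rcases hcases with h | h | h | h
  · rw [Finset.card_eq_zero] at h
    subst h
    simp at hxt
  · obtain ⟨a, rfl⟩ := Finset.card_eq_one.mp h
    refine ⟨a, a, a, hts (by simp), hts (by simp), hts (by simp), ?_⟩
    refine convexHull_mono ?_ hxt
    intro u hu
    simp at hu
    simp [hu]
  · obtain ⟨a, b, _, rfl⟩ := Finset.card_eq_two.mp h
    refine ⟨a, b, b, hts (by simp), hts (by simp), hts (by simp), ?_⟩
    refine convexHull_mono ?_ hxt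
    intro u hu
    simp at hu
    rcases hu with rfl | rfl <;> simp
  · obtain ⟨a, b, c, _, _, _, rfl⟩ := Finset.card_eq_three.mp h
    refine ⟨a, b, c, hts (by simp), hts (by simp), hts (by simp), ?_⟩
    refine convexHull_mono ?_ hxt
    intro u hu
    simp at hu
    rcases hu with rfl | rfl | rfl <;> simp

lemma hull_mpow (N : Set (ℤ × ℤ)) (hne : N.Nonempty) :
    ∀ p : ℕ, 1 ≤ p → convexHull ℝ (emb '' mpow N p) = (p : ℝ) • convexHull ℝ (emb '' N) := by
  intro p
  induction p with
  | zero => intro h; omega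
  | succ q ih =>
    intro _
    have himg : ∀ k : ℕ, emb '' mpow N (k + 1) = emb '' N + emb '' mpow N k := by
      intro k
      ext x
      constructor
      · rintro ⟨w, hw, rfl⟩
        obtain ⟨a, ha, b, hb, rfl⟩ := hw
        exact ⟨emb a, ⟨a, ha, rfl⟩, emb b, ⟨b, hb, rfl⟩, (emb_add a b).symm⟩
      · rintro ⟨u, ⟨a, ha, rfl⟩, v, ⟨b, hb, rfl⟩, rfl⟩
        exact ⟨a + b, Set.add_mem_add ha hb, emb_add a b⟩
    by_cases hq : q = 0
    · subst hq
      have h1 : mpow N 1 = N := by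
        ext x
        simp only [mpow, Set.mem_add, Set.mem_singleton_iff]
        constructor
        · rintro ⟨a, ha, b, rfl, rfl⟩; simpa using ha
        · intro hx; exact ⟨x, hx, 0, rfl, by simp⟩
      rw [h1]
      norm_num
    · have hq1 : 1 ≤ q := Nat.one_le_iff_ne_zero.mpr hq
      rw [himg q, convexHull_add, ih hq1,
        show ((q + 1 : ℕ) : ℝ) = 1 + (q : ℝ) by push_cast; ring,
        (convex_convexHull ℝ (emb '' N)).add_smul zero_le_one (by positivity), one_smul]

theorem stmt_12 (N : Set (ℤ × ℤ)) (hN : N.Finite) (hne : N.Nonempty)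
    (h0 : (0 : ℤ × ℤ) ∈ N) (hconv : LatticeConvex N) (p : ℕ) :
    LatticeConvex (mpow N p) := by
  intro z
  constructor
  · intro hz
    exact subset_convexHull ℝ _ ⟨z, hz, rfl⟩
  · intro hz
    match p with
    | 0 =>
      simp only [mpow, Set.image_singleton, convexHull_singleton, Set.mem_singleton_iff] at hz ⊢
      exact emb_inj (by simpa [emb] using hz)
    | p + 1 =>
      rw [hull_mpow N hne (p + 1) (Nat.le_add_left 1 p), ← convexHull_smul] at hz
      obtain ⟨a, b, c, ha, hb, hc, hmem⟩ := caratheodory_three hz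
      obtain ⟨u0, ⟨b0, hb0, rfl⟩, rfl⟩ := ha
      obtain ⟨u1, ⟨b1, hb1, rfl⟩, rfl⟩ := hb
      obtain ⟨u2, ⟨b2, hb2, rfl⟩, rfl⟩ := hc
      rw [mem_hull3_iff] at hmem
      obtain ⟨α, β, γ, hα, hβ, hγ, hs, h1, h2⟩ := hmem
      set q : ℝ := ((p : ℝ) + 1) with hq
      have hq0 : (0:ℝ) ≤ q := by positivity
      have hInD : InD ((p+1 : ℕ) : ℝ) (emb b0) (emb b1) (emb b2) (emb z) := by
        refine ⟨α * q, β * q, γ * q, by positivity, by positivity, by positivity, ?_, ?_, ?_⟩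
        · push_cast; nlinarith
        · rw [h1]; simp [smul_eq_mul]; ring
        · rw [h2]; simp [smul_eq_mul]; ring
      obtain ⟨l, hlen, hmem, hsum⟩ := tri_main (p+1) b0 b1 b2 z hInD
      have hlN : ∀ w ∈ l, w ∈ N := by
        intro w hw
        have h3 : emb w ∈ convexHull ℝ ({emb b0, emb b1, emb b2} : Set (ℝ × ℝ)) :=
          mem_hull3_iff.mpr (hmem w hw)
        have h4 : ({emb b0, emb b1, emb b2} : Set (ℝ × ℝ)) ⊆ emb '' N := by
          intro u hu
          rcases hu with h | h | h
          · exact ⟨b0, hb0, h.symm⟩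
          · exact ⟨b1, hb1, h.symm⟩
          · exact ⟨b2, hb2, h.symm⟩
        exact (hconv w).mpr (convexHull_mono h4 h3)
      rw [← hsum]
      exact sum_mem_mpow N (p+1) l hlen hlN
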